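/- For every natural number N, every real number k, and every real x with −1 ≤ x ≤ 1, the Fourier–Legendre series of I_N(k·) converges to the function value: ∑_{L=0}^∞ b_{LN}(k) · P_L(x) = I_N(kx), where b_{LN}(k) = ((2L+1)/2) ∫_{−1}^{1} I_N(kt) P_L(t) dt. -/

import Mathlib

open Real

/-- Modified Bessel function of the first kind of integer order `N`, defined by
its everywhere-convergent power series. -/
noncomputable def besselI (N : ℕ) (x : ℝ) : ℝ :=
  ∑' m : ℕ, (x / 2) ^ (2 * m + N) / ((m.factorial : ℝ) * ((m + N).factorial : ℝ))

/-- Legendre polynomial of degree `L` via Rodrigues' formula. -/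
noncomputable def legendreP (L : ℕ) : Polynomial ℝ :=
  Polynomial.C (1 / ((2 : ℝ) ^ L * (L.factorial : ℝ))) *
    (⇑Polynomial.derivative)^[L] ((Polynomial.X ^ 2 - 1) ^ L)

/-- The Fourier–Legendre coefficient `b_{LN}(k)` of `I_N(k·)`. -/
noncomputable def fourierLegendreCoeffI (L N : ℕ) (k : ℝ) : ℝ :=
  ((2 * (L : ℝ) + 1) / 2) * ∫ t in (-1:ℝ)..1, besselI N (k * t) * (legendreP L).eval t

open Polynomial intervalIntegral MeasureTheory

namespace FLaux


/-- abbreviation for `(X^2-1)^L`. -/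
noncomputable def W (L : ℕ) : Polynomial ℝ := ((X : Polynomial ℝ) ^ 2 - 1) ^ L

lemma contPoly (p : Polynomial ℝ) : Continuous fun t : ℝ => p.eval t := p.continuous

lemma intPoly (p : Polynomial ℝ) (a b : ℝ) :
    IntervalIntegrable (fun t => p.eval t) volume a b :=
  (contPoly p).intervalIntegrable a b

lemma intPolyMul (p q : Polynomial ℝ) (a b : ℝ) :
    IntervalIntegrable (fun t => p.eval t * q.eval t) volume a b :=
  ((contPoly p).mul (contPoly q)).intervalIntegrable a b

lemma ibp (p q : Polynomial ℝ) :
    ∫ t in (-1:ℝ)..1, (derivative p).eval t * q.eval t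
      = p.eval 1 * q.eval 1 - p.eval (-1) * q.eval (-1)
        - ∫ t in (-1:ℝ)..1, p.eval t * (derivative q).eval t := by
  have h := integral_deriv_mul_eq_sub (a := (-1:ℝ)) (b := 1)
      (u := fun t => p.eval t) (v := fun t => q.eval t)
      (u' := fun t => (derivative p).eval t) (v' := fun t => (derivative q).eval t)
      (fun x _ => p.hasDerivAt x) (fun x _ => q.hasDerivAt x)
      (intPoly _ _ _) (intPoly _ _ _)
  have h2 : ∫ t in (-1:ℝ)..1, ((derivative p).eval t * q.eval t
      + p.eval t * (derivative q).eval t)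
      = (∫ t in (-1:ℝ)..1, (derivative p).eval t * q.eval t)
        + ∫ t in (-1:ℝ)..1, p.eval t * (derivative q).eval t :=
    integral_add (intPolyMul _ _ _ _) (intPolyMul _ _ _ _)
  rw [h2] at h
  linarith [h]

lemma integral_derivative (p : Polynomial ℝ) :
    ∫ t in (-1:ℝ)..1, (derivative p).eval t = p.eval 1 - p.eval (-1) := by
  have := ibp p 1
  simpa using this

/-- divisibility chain -/
lemma dvd_iter (L j : ℕ) :
    ((X : Polynomial ℝ) ^ 2 - 1) ^ (L - j) ∣ (⇑derivative)^[j] (W L) := by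
  induction j with
  | zero => simpa [W] using dvd_refl _
  | succ j ih =>
    rcases ih with ⟨q, hq⟩
    rw [Function.iterate_succ_apply', hq]
    rcases Nat.eq_zero_or_pos (L - j) with h0 | hpos
    · have : L - (j+1) = 0 := by omega
      simp [this]
    · obtain ⟨m, hm⟩ : ∃ m, L - j = m + 1 := ⟨L - j - 1, by omega⟩
      have hm' : L - (j+1) = m := by omega
      rw [hm, hm', derivative_mul, derivative_pow]
      simp only [Nat.add_sub_cancel]
      exact dvd_add (((dvd_mul_left _ _).mul_right _).mul_right _)
        ((pow_dvd_pow _ (Nat.le_succ m)).mul_right _)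

lemma eval_iter_zero (L j : ℕ) (hj : j < L) (c : ℝ) (hc : c ^ 2 = 1) :
    ((⇑derivative)^[j] (W L)).eval c = 0 := by
  rcases dvd_iter L j with ⟨q, hq⟩
  rw [hq, eval_mul, eval_pow, eval_sub, eval_pow, eval_one, eval_X, hc]
  have : L - j ≠ 0 := by omega
  simp [zero_pow this]

/-- iterated integration by parts -/
lemma key (L : ℕ) (q : Polynomial ℝ) : ∀ j ≤ L,
    ∫ t in (-1:ℝ)..1, ((⇑derivative)^[L] (W L)).eval t * q.eval t
      = (-1:ℝ)^j * ∫ t in (-1:ℝ)..1,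
          ((⇑derivative)^[L-j] (W L)).eval t * ((⇑derivative)^[j] q).eval t := by
  intro j hj
  induction j with
  | zero => simp
  | succ j ih =>
    have hjL : j ≤ L := by omega
    rw [ih hjL]
    have hsplit : L - j = (L - (j+1)) + 1 := by omega
    have hiter : (⇑derivative)^[L-j] (W L)
        = derivative ((⇑derivative)^[L-(j+1)] (W L)) := by
      rw [hsplit, Function.iterate_succ_apply']
    have hbd1 : ((⇑derivative)^[L-(j+1)] (W L)).eval 1 = 0 :=
      eval_iter_zero L _ (by omega) 1 (by norm_num)
    have hbd2 : ((⇑derivative)^[L-(j+1)] (W L)).eval (-1) = 0 :=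
      eval_iter_zero L _ (by omega) (-1) (by norm_num)
    rw [hiter, ibp, hbd1, hbd2, ← Function.iterate_succ_apply' derivative j q]
    ring




-- from chunk 1 (assumed):
lemma monic_W (L : ℕ) : (W L).Monic := by
  have h1 : ((X : Polynomial ℝ) ^ 2 - 1).Monic := by
    have := monic_X_pow_sub_C (1 : ℝ) (two_ne_zero)
    simpa using this
  exact h1.pow L

lemma natDegree_W (L : ℕ) : (W L).natDegree = 2 * L := by
  have h1 : ((X : Polynomial ℝ) ^ 2 - 1).Monic := by
    have := monic_X_pow_sub_C (1 : ℝ) (two_ne_zero)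
    simpa using this
  have : (W L).natDegree = L * ((X : Polynomial ℝ) ^ 2 - 1).natDegree := h1.natDegree_pow L
  rw [this]
  have h2 : ((X : Polynomial ℝ) ^ 2 - 1).natDegree = 2 := by
    have := natDegree_X_pow_sub_C (n := 2) (r := (1:ℝ))
    simpa using this
  rw [h2]; ring

lemma coeff_W_top (L : ℕ) : (W L).coeff (2 * L) = 1 := by
  have := (monic_W L).coeff_natDegree
  rwa [natDegree_W] at this

/-- `D^{2L} W_L = C ((2L)!)` -/
lemma iter_deriv_W_top (L : ℕ) :
    (⇑derivative)^[2*L] (W L) = C (((2*L).factorial : ℝ)) := by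
  have hdeg : ((⇑derivative)^[2*L] (W L)).natDegree = 0 := by
    have := natDegree_iterate_derivative (W L) (2*L)
    rw [natDegree_W] at this; omega
  have hC := eq_C_of_natDegree_eq_zero hdeg
  rw [hC]
  congr 1
  rw [coeff_iterate_derivative, zero_add, coeff_W_top]
  simp [Nat.descFactorial_self]

lemma intW (L : ℕ) : ∫ t in (-1:ℝ)..1, (W L).eval t
    = (-1:ℝ)^L * (2^(2*L+1) * ((L.factorial : ℝ))^2 / (((2*L+1).factorial : ℝ))) := by
  induction L with
  | zero => simp [W]; norm_num
  | succ L ih =>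
    have hderiv : derivative ((X : Polynomial ℝ) * W (L+1))
        = C (2*(L:ℝ)+3) * W (L+1) + C (2*(L:ℝ)+2) * W L := by
      rw [W, W, derivative_mul, derivative_X, derivative_pow, derivative_sub,
        derivative_one, derivative_X_pow]
      have hpow : ((X : Polynomial ℝ) ^ 2 - 1) ^ (L+1) = ((X:Polynomial ℝ)^2-1)^L * ((X:Polynomial ℝ)^2-1) := pow_succ _ _
      rw [Nat.add_sub_cancel, hpow]
      push_cast
      simp only [map_add, map_one, map_mul, map_ofNat]
      ring
    have hint := integral_derivative ((X : Polynomial ℝ) * W (L+1))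
    have hb1 : ((X : Polynomial ℝ) * W (L+1)).eval 1 = 0 := by
      simp [W]
    have hb2 : ((X : Polynomial ℝ) * W (L+1)).eval (-1) = 0 := by
      simp [W]
    rw [hb1, hb2, sub_zero] at hint
    rw [hderiv] at hint
    have hsplit : ∫ t in (-1:ℝ)..1,
        (C (2*(L:ℝ)+3) * W (L+1) + C (2*(L:ℝ)+2) * W L).eval t
        = (2*(L:ℝ)+3) * (∫ t in (-1:ℝ)..1, (W (L+1)).eval t)
          + (2*(L:ℝ)+2) * (∫ t in (-1:ℝ)..1, (W L).eval t) := by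
      have e1 : ∀ t : ℝ, (C (2*(L:ℝ)+3) * W (L+1) + C (2*(L:ℝ)+2) * W L).eval t
          = (2*(L:ℝ)+3) * (W (L+1)).eval t + (2*(L:ℝ)+2) * (W L).eval t := by
        intro t; simp [eval_add, eval_mul]
      rw [intervalIntegral.integral_congr (g := fun t => (2*(L:ℝ)+3) * (W (L+1)).eval t + (2*(L:ℝ)+2) * (W L).eval t) (fun t _ => e1 t)]
      rw [integral_add (((intPoly (W (L+1)) _ _).const_mul _)) (((intPoly (W L) _ _).const_mul _))]
      rw [intervalIntegral.integral_const_mul, intervalIntegral.integral_const_mul]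
    rw [hsplit, ih] at hint
    have h3 : (2*(L:ℝ)+3) ≠ 0 := by positivity
    have hIval : (∫ t in (-1:ℝ)..1, (W (L+1)).eval t)
        = -(2*(L:ℝ)+2) / (2*(L:ℝ)+3) * ((-1:ℝ)^L * (2^(2*L+1) * ((L.factorial : ℝ))^2 / (((2*L+1).factorial : ℝ)))) := by
      field_simp at hint ⊢
      linarith [hint]
    rw [hIval]
    have hf1 : ((2*(L+1)+1).factorial : ℝ) = (2*(L:ℝ)+3) * ((2*(L:ℝ)+2)) * ((2*L+1).factorial : ℝ) := by
      have : 2*(L+1)+1 = (2*L+1) + 1 + 1 := by ring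
      rw [this, Nat.factorial_succ, Nat.factorial_succ]
      push_cast; ring
    have hf2 : (((L+1).factorial : ℝ)) = ((L:ℝ)+1) * (L.factorial : ℝ) := by
      rw [Nat.factorial_succ]; push_cast; ring
    rw [hf1, hf2]
    have hfacpos : (0:ℝ) < ((2*L+1).factorial : ℝ) := by positivity
    field_simp
    ring



-- previous chunks:
lemma legendre_eval (L : ℕ) (t : ℝ) :
    (legendreP L).eval t = (1 / ((2:ℝ)^L * (L.factorial : ℝ))) *
      ((⇑derivative)^[L] (W L)).eval t := by
  simp [legendreP, W]

/-- orthogonality to lower degrees -/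
lemma J_orth {q : Polynomial ℝ} {L : ℕ} (h : q.natDegree < L) :
    ∫ t in (-1:ℝ)..1, q.eval t * (legendreP L).eval t = 0 := by
  have h1 : ∀ t : ℝ, q.eval t * (legendreP L).eval t
      = (1 / ((2:ℝ)^L * (L.factorial : ℝ))) *
        (((⇑derivative)^[L] (W L)).eval t * q.eval t) := by
    intro t; rw [legendre_eval]; ring
  rw [intervalIntegral.integral_congr (fun t _ => h1 t), intervalIntegral.integral_const_mul,
    key L q L le_rfl, Polynomial.iterate_derivative_eq_zero h]
  simp

lemma J_self (L : ℕ) :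
    ∫ t in (-1:ℝ)..1, (legendreP L).eval t * (legendreP L).eval t = 2 / (2*(L:ℝ)+1) := by
  set c : ℝ := 1 / ((2:ℝ)^L * (L.factorial : ℝ)) with hc
  have h1 : ∀ t : ℝ, (legendreP L).eval t * (legendreP L).eval t
      = c * (c * (((⇑derivative)^[L] (W L)).eval t * ((⇑derivative)^[L] (W L)).eval t)) := by
    intro t; rw [legendre_eval]; ring
  rw [intervalIntegral.integral_congr (fun t _ => h1 t), intervalIntegral.integral_const_mul,
    intervalIntegral.integral_const_mul, key L _ L le_rfl]
  have h2 : (⇑derivative)^[L] ((⇑derivative)^[L] (W L)) = C (((2*L).factorial : ℝ)) := by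
    rw [← Function.iterate_add_apply]
    have : L + L = 2 * L := by ring
    rw [this, iter_deriv_W_top]
  rw [Nat.sub_self, h2]
  simp only [Function.iterate_zero_apply, eval_C]
  have h3 : ∫ t in (-1:ℝ)..1, (W L).eval t * ((2*L).factorial : ℝ)
      = ((2*L).factorial : ℝ) * ∫ t in (-1:ℝ)..1, (W L).eval t := by
    rw [← intervalIntegral.integral_const_mul]
    exact intervalIntegral.integral_congr (fun t _ => by ring)
  rw [h3, intW]
  have hfac : ((2*L+1).factorial : ℝ) = (2*(L:ℝ)+1) * ((2*L).factorial : ℝ) := by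
    rw [Nat.factorial_succ]; push_cast; ring
  have hL2 : (0:ℝ) < (2:ℝ)^L := by positivity
  have hLf : (0:ℝ) < (L.factorial : ℝ) := by positivity
  have h2Lf : (0:ℝ) < ((2*L).factorial : ℝ) := by positivity
  have hm : (-1:ℝ)^L * (-1:ℝ)^L = 1 := by
    rw [← pow_add]; exact Even.neg_one_pow ⟨L, by ring⟩
  have hpow : (2:ℝ)^(2*L+1) = 2 * ((2:ℝ)^L * (2:ℝ)^L) := by
    rw [show 2*L+1 = L+L+1 by ring, pow_add, pow_add, pow_one]; ring
  have e1 : c * c * ((2:ℝ)^(2*L+1) * ((L.factorial : ℝ))^2) = 2 := by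
    rw [hc, hpow]; field_simp
  have e2 : c * (c * ((-1:ℝ)^L * (((2*L).factorial : ℝ) *
      ((-1:ℝ)^L * ((2:ℝ)^(2*L+1) * ((L.factorial : ℝ))^2 / (((2*L+1).factorial : ℝ)))))))
      = ((-1:ℝ)^L * (-1:ℝ)^L) * (c * c * ((2:ℝ)^(2*L+1) * ((L.factorial : ℝ))^2))
        * (((2*L).factorial : ℝ) / (((2*L+1).factorial : ℝ))) := by ring
  rw [e2, hm, e1, hfac, one_mul]
  field_simp

lemma natDegree_legendre_le (L : ℕ) : (legendreP L).natDegree ≤ L := by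
  refine (natDegree_C_mul_le _ _).trans ?_
  have := natDegree_iterate_derivative (((X : Polynomial ℝ)^2 - 1)^L) L
  have hW : (((X : Polynomial ℝ)^2 - 1)^L).natDegree = 2 * L := natDegree_W L
  omega

lemma coeff_legendre_self (L : ℕ) :
    (legendreP L).coeff L = (((2*L).descFactorial L : ℝ)) / ((2:ℝ)^L * (L.factorial : ℝ)) := by
  rw [legendreP, coeff_C_mul, coeff_iterate_derivative]
  have : L + L = 2 * L := by ring
  rw [this]
  have : ((((X : Polynomial ℝ)^2 - 1)^L).coeff (2*L)) = 1 := coeff_W_top L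
  rw [this]
  simp [nsmul_eq_mul]
  ring

lemma coeff_legendre_self_ne (L : ℕ) : (legendreP L).coeff L ≠ 0 := by
  rw [coeff_legendre_self]
  have h1 : 0 < (2*L).descFactorial L :=
    Nat.pos_of_ne_zero (fun hz => by have := Nat.descFactorial_eq_zero_iff_lt.mp hz; omega)
  have h2 : (0:ℝ) < ((2*L).descFactorial L : ℝ) := by exact_mod_cast h1
  positivity

lemma natDegree_legendre (L : ℕ) : (legendreP L).natDegree = L :=
  le_antisymm (natDegree_legendre_le L) (le_natDegree_of_ne_zero (coeff_legendre_self_ne L))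

lemma J_PP {L M : ℕ} (h : L ≠ M) :
    ∫ t in (-1:ℝ)..1, (legendreP L).eval t * (legendreP M).eval t = 0 := by
  rcases lt_or_gt_of_ne h with hlt | hgt
  · exact J_orth (by rw [natDegree_legendre]; exact hlt)
  · rw [intervalIntegral.integral_congr
      (g := fun t => (legendreP M).eval t * (legendreP L).eval t) (fun t _ => by ring)]
    exact J_orth (by rw [natDegree_legendre]; exact hgt)

lemma mem_span (p : Polynomial ℝ) : p ∈ Submodule.span ℝ (Set.range legendreP) := by
  have main : ∀ n : ℕ, ∀ p : Polynomial ℝ, p.natDegree ≤ n →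
      p ∈ Submodule.span ℝ (Set.range legendreP) := by
    intro n
    induction n with
    | zero =>
      intro p hp
      have hp0 : p = C (p.coeff 0) := eq_C_of_natDegree_le_zero hp
      have hl0 : legendreP 0 = 1 := by simp [legendreP]
      have : p = p.coeff 0 • legendreP 0 := by
        rw [hl0, smul_eq_C_mul, mul_one]; exact hp0
      rw [this]
      exact Submodule.smul_mem _ _ (Submodule.subset_span ⟨0, rfl⟩)
    | succ n ih =>
      intro p hp
      by_cases hple : p.natDegree ≤ n
      · exact ih p hple
      · have hdeg : p.natDegree = n + 1 := by omega
        set c : ℝ := p.coeff (n+1) / (legendreP (n+1)).coeff (n+1) with hcdef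
        have hr : (p - C c * legendreP (n+1)).natDegree ≤ n := by
          rw [natDegree_le_iff_coeff_eq_zero]
          intro m hm
          rcases eq_or_lt_of_le (Nat.succ_le_of_lt hm) with he | hlt
          · rw [coeff_sub, coeff_C_mul, ← he, hcdef,
              div_mul_cancel₀ _ (coeff_legendre_self_ne (n+1)), sub_self]
          · rw [coeff_sub, coeff_C_mul,
              coeff_eq_zero_of_natDegree_lt (by omega),
              coeff_eq_zero_of_natDegree_lt (by rw [natDegree_legendre]; omega)]
            simp
        have hmem := ih _ hr
        have : p = (p - C c * legendreP (n+1)) + c • legendreP (n+1) := by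
          rw [smul_eq_C_mul]; ring
        rw [this]
        exact Submodule.add_mem _ hmem
          (Submodule.smul_mem _ _ (Submodule.subset_span ⟨n+1, rfl⟩))
  exact main p.natDegree p le_rfl

lemma zero_of_J_self_zero {q : Polynomial ℝ}
    (h : ∫ t in (-1:ℝ)..1, q.eval t * q.eval t = 0) : q = 0 := by
  have hzero : ∀ x ∈ Set.Ioo (-1:ℝ) 1, q.eval x = 0 := by
    by_contra hcon
    push_neg at hcon
    obtain ⟨x₀, hx₀, hne⟩ := hcon
    have hfnn : (0:ℝ → ℝ) ≤ᵐ[volume] fun t => q.eval t * q.eval t := by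
      filter_upwards with t using mul_self_nonneg _
    have hpos : 0 < ∫ t in (-1:ℝ)..1, q.eval t * q.eval t := by
      rw [integral_pos_iff_support_of_nonneg_ae hfnn (intPolyMul q q _ _)]
      refine ⟨by norm_num, ?_⟩
      have hU : IsOpen {t : ℝ | q.eval t ≠ 0} :=
        isOpen_ne.preimage q.continuous
      have hsub : {t : ℝ | q.eval t ≠ 0} ∩ Set.Ioo (-1:ℝ) 1 ⊆
          (Function.support fun t => q.eval t * q.eval t) ∩ Set.Ioc (-1:ℝ) 1 := by
        rintro t ⟨ht1, ht2⟩
        exact ⟨by simp [Function.mem_support, mul_self_eq_zero]; exact ht1,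
          Set.Ioo_subset_Ioc_self ht2⟩
      refine lt_of_lt_of_le ?_ (measure_mono hsub)
      exact (hU.inter isOpen_Ioo).measure_pos volume ⟨x₀, hne, hx₀⟩
    exact absurd h (by linarith)
  have hroots : (Set.Ioo (-1:ℝ) 1) ⊆ {x | q.IsRoot x} := fun x hx => hzero x hx
  have hinf : {x | q.IsRoot x}.Infinite :=
    Set.Infinite.mono hroots (Set.Ioo_infinite (by norm_num))
  exact Polynomial.eq_zero_of_infinite_isRoot q hinf



/-- Legendre coefficient of the monomial `t^n`. -/
noncomputable def aCoef (L n : ℕ) : ℝ :=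
  ((2*(L:ℝ)+1)/2) * ∫ t in (-1:ℝ)..1, t^n * (legendreP L).eval t

lemma aCoef_eq (L n : ℕ) : aCoef L n
    = ((2*(L:ℝ)+1)/2) * ∫ t in (-1:ℝ)..1, ((X:Polynomial ℝ)^n).eval t * (legendreP L).eval t := by
  simp [aCoef]

lemma aCoef_eq_zero {L n : ℕ} (h : n < L) : aCoef L n = 0 := by
  rw [aCoef_eq, J_orth (by simpa [natDegree_X_pow] using h), mul_zero]

/-- expansion of monomials in Legendre polynomials -/
lemma monomial_expand (n : ℕ) :
    (X : Polynomial ℝ)^n = ∑ L ∈ Finset.range (n+1), C (aCoef L n) * legendreP L := by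
  set q : Polynomial ℝ :=
    (X : Polynomial ℝ)^n - ∑ L ∈ Finset.range (n+1), C (aCoef L n) * legendreP L with hq
  have hqP : ∀ M : ℕ, ∫ t in (-1:ℝ)..1, q.eval t * (legendreP M).eval t = 0 := by
    intro M
    have hsplit : ∀ t : ℝ, q.eval t * (legendreP M).eval t
        = ((X : Polynomial ℝ)^n).eval t * (legendreP M).eval t
          - ∑ L ∈ Finset.range (n+1), aCoef L n * ((legendreP L).eval t * (legendreP M).eval t) := by
      intro t
      rw [hq]
      simp only [eval_sub, eval_finset_sum, eval_mul, eval_C, eval_pow, eval_X]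
      rw [sub_mul, Finset.sum_mul]
      congr 1
      refine Finset.sum_congr rfl fun L _ => by ring
    rw [intervalIntegral.integral_congr (fun t _ => hsplit t)]
    rw [intervalIntegral.integral_sub (intPolyMul ((X:Polynomial ℝ)^n) (legendreP M) _ _) ?_]
    · rw [intervalIntegral.integral_finset_sum (fun L _ =>
        ((intPolyMul (legendreP L) (legendreP M) _ _).const_mul _))]
      have hterm : ∀ L ∈ Finset.range (n+1),
          (∫ t in (-1:ℝ)..1, aCoef L n * ((legendreP L).eval t * (legendreP M).eval t))
            = aCoef L n * ∫ t in (-1:ℝ)..1, (legendreP L).eval t * (legendreP M).eval t := by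
        intro L _
        exact intervalIntegral.integral_const_mul _ _
      rw [Finset.sum_congr rfl hterm]
      by_cases hM : M ≤ n
      · rw [Finset.sum_eq_single M
          (fun L _ hLM => by rw [J_PP hLM, mul_zero])
          (fun h => absurd (Finset.mem_range.mpr (by omega)) h)]
        rw [J_self, aCoef_eq]
        have h2M : (2*(M:ℝ)+1) ≠ 0 := by positivity
        field_simp
        simp
      · push_neg at hM
        have h1 : (∫ t in (-1:ℝ)..1, ((X:Polynomial ℝ)^n).eval t * (legendreP M).eval t) = 0 :=
          J_orth (by simpa [natDegree_X_pow] using hM)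
        have h2 : ∑ L ∈ Finset.range (n+1), aCoef L n *
            (∫ t in (-1:ℝ)..1, (legendreP L).eval t * (legendreP M).eval t) = 0 :=
          Finset.sum_eq_zero (fun L hL => by
            rw [J_PP (by rw [Finset.mem_range] at hL; omega), mul_zero])
        rw [h1, h2, sub_zero]
    · refine Continuous.intervalIntegrable ?_ _ _
      exact continuous_finset_sum _ (fun L _ =>
        (continuous_const.mul ((legendreP L).continuous.mul (legendreP M).continuous)))
  have hqq : ∫ t in (-1:ℝ)..1, q.eval t * q.eval t = 0 := by
    have main : ∀ r : Polynomial ℝ, ∫ t in (-1:ℝ)..1, q.eval t * r.eval t = 0 := by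
      intro r
      refine Submodule.span_induction
        (p := fun r _ => ∫ t in (-1:ℝ)..1, q.eval t * r.eval t = 0)
        ?_ ?_ ?_ ?_ (mem_span r)
      · rintro x ⟨M, rfl⟩; exact hqP M
      · simp
      · intro x y _ _ hx hy
        have : ∀ t : ℝ, q.eval t * (x+y).eval t = q.eval t * x.eval t + q.eval t * y.eval t := by
          intro t; simp [eval_add]; ring
        rw [intervalIntegral.integral_congr (fun t _ => this t),
          intervalIntegral.integral_add (intPolyMul q x _ _) (intPolyMul q y _ _), hx, hy, add_zero]
      · intro a x _ hx
        have : ∀ t : ℝ, q.eval t * (a • x).eval t = a * (q.eval t * x.eval t) := by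
          intro t; simp [eval_smul]; ring
        rw [intervalIntegral.integral_congr (fun t _ => this t),
          intervalIntegral.integral_const_mul, hx, mul_zero]
    exact main q
  have := zero_of_J_self_zero hqq
  rw [hq] at this
  linear_combination (norm := ring_nf) this

/-- evaluated version -/
lemma monomial_expand_eval (n : ℕ) (x : ℝ) :
    x^n = ∑ L ∈ Finset.range (n+1), aCoef L n * (legendreP L).eval x := by
  have := congrArg (fun p => Polynomial.eval x p) (monomial_expand n)
  simpa [eval_finset_sum] using this




lemma W_expand (L : ℕ) : W L
    = ∑ k ∈ Finset.range (L+1), C (((-1:ℝ))^(L-k) * (L.choose k : ℝ)) * X^(2*k) := by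
  rw [W, sub_eq_add_neg, add_pow]
  refine Finset.sum_congr rfl fun k hk => ?_
  rw [← pow_mul]
  have h1 : (-1 : Polynomial ℝ) ^ (L-k) = C ((-1:ℝ)^(L-k)) := by
    rw [map_pow, map_neg, map_one]
  have h2 : ((L.choose k : ℕ) : Polynomial ℝ) = C ((L.choose k : ℝ)) := by
    rw [← C_eq_natCast]
  rw [h1, h2, mul_assoc, ← C_mul]
  ring

lemma abs_coeff_W_le (L j : ℕ) : |(W L).coeff j| ≤ 2^L := by
  rw [W_expand, finset_sum_coeff]
  refine le_trans (Finset.abs_sum_le_sum_abs _ _) ?_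
  have hbound : ∀ k ∈ Finset.range (L+1),
      |(C (((-1:ℝ))^(L-k) * (L.choose k : ℝ)) * X^(2*k)).coeff j| ≤ (L.choose k : ℝ) := by
    intro k _
    rw [coeff_C_mul, coeff_X_pow]
    rcases eq_or_ne j (2*k) with h | h
    · rw [if_pos h, mul_one, abs_mul, abs_pow, abs_neg, abs_one, one_pow, one_mul,
        Nat.abs_cast]
    · rw [if_neg h, mul_zero, abs_zero]; positivity
  refine le_trans (Finset.sum_le_sum hbound) ?_
  have hcast : (∑ k ∈ Finset.range (L+1), (L.choose k : ℝ)) = ((2^L : ℕ) : ℝ) := by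
    rw [← Nat.cast_sum, Nat.sum_range_choose]
  rw [hcast]
  push_cast
  exact le_refl _

lemma choose_central_le (L : ℕ) : ((2*L).choose L : ℝ) ≤ 4^L := by
  have h1 : (2*L).choose L ≤ ∑ i ∈ Finset.range (2*L+1), (2*L).choose i :=
    Finset.single_le_sum (f := fun i => (2*L).choose i) (fun i _ => Nat.zero_le _)
      (Finset.mem_range.mpr (by omega))
  have h2 : ∑ i ∈ Finset.range (2*L+1), (2*L).choose i = 2^(2*L) := Nat.sum_range_choose (2*L)
  have h3 : (2*L).choose L ≤ 2^(2*L) := h2 ▸ h1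
  calc ((2*L).choose L : ℝ) ≤ ((2^(2*L) : ℕ) : ℝ) := by exact_mod_cast h3
    _ = 4^L := by push_cast; rw [pow_mul]; norm_num

lemma abs_coeff_legendre_le (L i : ℕ) (hi : i ≤ L) : |(legendreP L).coeff i| ≤ 4^L := by
  rw [legendreP, coeff_C_mul, coeff_iterate_derivative]
  have hWc : |(((X : Polynomial ℝ)^2 - 1)^L).coeff (i+L)| ≤ 2^L := abs_coeff_W_le L (i+L)
  have hd : ((i+L).descFactorial L : ℝ) ≤ ((2*L).descFactorial L : ℝ) := by
    exact_mod_cast Nat.descFactorial_le L (by omega)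
  have hdf : ((2*L).descFactorial L : ℝ) = (L.factorial : ℝ) * ((2*L).choose L : ℝ) := by
    exact_mod_cast Nat.descFactorial_eq_factorial_mul_choose (2*L) L
  have hsmul : (((i+L).descFactorial L : ℕ) • ((((X : Polynomial ℝ)^2-1)^L).coeff (i+L)))
      = (((i+L).descFactorial L : ℝ)) * ((((X : Polynomial ℝ)^2-1)^L).coeff (i+L)) := by
    simp [nsmul_eq_mul]
  rw [hsmul, abs_mul, abs_mul, Nat.abs_cast,
    abs_of_pos (show (0:ℝ) < 1/((2:ℝ)^L * (L.factorial : ℝ)) by positivity)]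
  have hmul : ((i+L).descFactorial L : ℝ) * |(((X : Polynomial ℝ)^2-1)^L).coeff (i+L)|
      ≤ ((2*L).descFactorial L : ℝ) * 2^L :=
    mul_le_mul hd hWc (abs_nonneg _) (by positivity)
  have hfin : (1/((2:ℝ)^L * (L.factorial : ℝ))) * (((2*L).descFactorial L : ℝ) * 2^L)
      = ((2*L).choose L : ℝ) := by
    rw [hdf]
    have : (L.factorial : ℝ) ≠ 0 := by positivity
    field_simp
  calc (1/((2:ℝ)^L * (L.factorial : ℝ)))
        * (((i+L).descFactorial L : ℝ) * |(((X : Polynomial ℝ)^2-1)^L).coeff (i+L)|)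
      ≤ (1/((2:ℝ)^L * (L.factorial : ℝ))) * (((2*L).descFactorial L : ℝ) * 2^L) :=
        mul_le_mul_of_nonneg_left hmul (by positivity)
    _ = ((2*L).choose L : ℝ) := hfin
    _ ≤ 4^L := choose_central_le L

lemma abs_eval_legendre_le (L : ℕ) {x : ℝ} (hx : |x| ≤ 1) :
    |(legendreP L).eval x| ≤ ((L:ℝ)+1) * 4^L := by
  rw [eval_eq_sum_range, natDegree_legendre]
  refine le_trans (Finset.abs_sum_le_sum_abs _ _) ?_
  have hbound : ∀ i ∈ Finset.range (L+1), |(legendreP L).coeff i * x^i| ≤ 4^L := by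
    intro i hi
    rw [abs_mul]
    have h1 : |(legendreP L).coeff i| ≤ 4^L :=
      abs_coeff_legendre_le L i (by simp only [Finset.mem_range] at hi; omega)
    have h2 : |x^i| ≤ 1 := by
      rw [abs_pow]; exact pow_le_one₀ (abs_nonneg _) hx
    calc |(legendreP L).coeff i| * |x^i| ≤ 4^L * 1 :=
      mul_le_mul h1 h2 (abs_nonneg _) (by positivity)
      _ = 4^L := mul_one _
  refine le_trans (Finset.sum_le_sum hbound) ?_
  rw [Finset.sum_const, Finset.card_range, nsmul_eq_mul]
  push_cast
  exact le_refl _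




/-- series coefficients -/
noncomputable def gg (N : ℕ) (k : ℝ) (m : ℕ) : ℝ :=
  (k/2)^(2*m+N) / ((m.factorial : ℝ) * ((m+N).factorial : ℝ))

lemma besselI_mul_eq (N : ℕ) (k x : ℝ) :
    besselI N (k*x) = ∑' m, gg N k m * x^(2*m+N) := by
  unfold besselI gg
  refine tsum_congr fun m => ?_
  rw [show k*x/2 = (k/2)*x by ring, mul_pow]
  ring

lemma abs_gg_le (N : ℕ) (k : ℝ) (m : ℕ) :
    |gg N k m| ≤ (|k|/2)^N * ((|k|/2)^2)^m / m.factorial := by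
  unfold gg
  rw [abs_div, abs_pow, abs_div]
  have h2 : |(2:ℝ)| = 2 := by norm_num
  rw [h2]
  have hnum : (|k|/2)^(2*m+N) = (|k|/2)^N * ((|k|/2)^2)^m := by
    rw [← pow_mul, ← pow_add]; ring_nf
  have hden : |(m.factorial : ℝ) * ((m+N).factorial : ℝ)| = (m.factorial : ℝ) * ((m+N).factorial : ℝ) := by
    rw [abs_of_pos]; positivity
  rw [hnum, hden]
  rw [div_le_div_iff₀ (by positivity) (by positivity)]
  have hfac : (1:ℝ) ≤ ((m+N).factorial : ℝ) := by exact_mod_cast Nat.one_le_iff_ne_zero.mpr (Nat.factorial_ne_zero _)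
  have hnn : (0:ℝ) ≤ (|k|/2)^N * ((|k|/2)^2)^m * (m.factorial:ℝ) := by positivity
  calc (|k|/2)^N * ((|k|/2)^2)^m * (m.factorial:ℝ)
      = ((|k|/2)^N * ((|k|/2)^2)^m * (m.factorial:ℝ)) * 1 := (mul_one _).symm
    _ ≤ ((|k|/2)^N * ((|k|/2)^2)^m * (m.factorial:ℝ)) * ((m+N).factorial : ℝ) := by
        exact mul_le_mul_of_nonneg_left hfac hnn
    _ = (|k|/2)^N * ((|k|/2)^2)^m * ((m.factorial:ℝ) * ((m+N).factorial : ℝ)) := by ring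

lemma summable_gg_mul (N : ℕ) (k A B : ℝ) (hB : 0 ≤ B) :
    Summable (fun m : ℕ => A * ((|k|/2)^N * ((|k|/2)^2 * B)^m / m.factorial)) := by
  have h := Real.summable_pow_div_factorial ((|k|/2)^2 * B)
  have h2 := h.mul_left (A * (|k|/2)^N)
  refine h2.congr fun m => ?_
  ring

/-- the interchange: Fourier-Legendre coefficient as a series -/
lemma coeff_eq (L N : ℕ) (k : ℝ) :
    fourierLegendreCoeffI L N k = ∑' m, gg N k m * aCoef L (2*m+N) := by
  unfold fourierLegendreCoeffI
  have h1 : ∀ t : ℝ, besselI N (k*t) * (legendreP L).eval t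
      = ∑' m, gg N k m * t^(2*m+N) * (legendreP L).eval t := by
    intro t
    rw [besselI_mul_eq]
    exact (tsum_mul_right).symm
  rw [intervalIntegral.integral_congr (fun t _ => h1 t)]
  rw [intervalIntegral.integral_of_le (by norm_num : (-1:ℝ) ≤ 1)]
  set F : ℕ → ℝ → ℝ := fun m t => gg N k m * t^(2*m+N) * (legendreP L).eval t with hF
  have hFcont : ∀ m, Continuous (F m) := fun m =>
    (continuous_const.mul (continuous_pow _)).mul (legendreP L).continuous
  have hF_int : ∀ m, Integrable (F m) (volume.restrict (Set.Ioc (-1:ℝ) 1)) := fun m =>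
    (hFcont m).integrableOn_Ioc
  have hbnd : ∀ m, ∀ t ∈ Set.Ioc (-1:ℝ) 1, ‖(fun s => ‖F m s‖) t‖ ≤ |gg N k m| * (((L:ℝ)+1) * 4^L) := by
    intro m t ht
    rw [norm_norm]
    have htabs : |t| ≤ 1 := abs_le.mpr ⟨le_of_lt ht.1, ht.2⟩
    have h1 : ‖F m t‖ = |gg N k m| * |t^(2*m+N)| * |(legendreP L).eval t| := by
      rw [hF]; simp [abs_mul]
    rw [h1]
    have h2 : |t^(2*m+N)| ≤ 1 := by
      rw [abs_pow]; exact pow_le_one₀ (abs_nonneg _) htabs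
    have h3 : |(legendreP L).eval t| ≤ ((L:ℝ)+1) * 4^L := abs_eval_legendre_le L htabs
    calc |gg N k m| * |t^(2*m+N)| * |(legendreP L).eval t|
        ≤ |gg N k m| * 1 * (((L:ℝ)+1) * 4^L) := by
          refine mul_le_mul (mul_le_mul_of_nonneg_left h2 (abs_nonneg _)) h3 (abs_nonneg _) ?_
          positivity
      _ = |gg N k m| * (((L:ℝ)+1) * 4^L) := by ring
  have hF_sum : Summable fun m => ∫ t in Set.Ioc (-1:ℝ) 1, ‖F m t‖ := by
    set G : ℕ → ℝ := fun m => |gg N k m| * (((L:ℝ)+1) * 4^L) * 2 with hG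
    have hGs : Summable G := by
      have hs := summable_gg_mul N k ((((L:ℝ)+1) * 4^L) * 2) 1 zero_le_one
      refine hs.of_nonneg_of_le (fun m => by positivity) (fun m => ?_)
      have habs := abs_gg_le N k m
      calc |gg N k m| * (((L:ℝ)+1) * 4^L) * 2
          ≤ ((|k|/2)^N * ((|k|/2)^2)^m / m.factorial) * (((L:ℝ)+1) * 4^L) * 2 := by
            refine mul_le_mul_of_nonneg_right (mul_le_mul_of_nonneg_right habs (by positivity)) (by norm_num)
        _ = (((L:ℝ)+1) * 4^L * 2) * ((|k|/2)^N * ((|k|/2)^2 * 1)^m / m.factorial) := by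
            rw [mul_one]; ring
    refine Summable.of_nonneg_of_le (fun m => integral_nonneg (fun t => norm_nonneg _))
      (fun m => ?_) hGs
    · show (∫ t in Set.Ioc (-1:ℝ) 1, ‖F m t‖) ≤ |gg N k m| * (((L:ℝ)+1) * 4^L) * 2
      have hle : ‖∫ t in Set.Ioc (-1:ℝ) 1, ‖F m t‖‖
          ≤ (|gg N k m| * (((L:ℝ)+1) * 4^L)) * (volume (Set.Ioc (-1:ℝ) 1)).toReal := by
        refine norm_setIntegral_le_of_norm_le_const ?_ (hbnd m)
        · rw [Real.volume_Ioc]; exact ENNReal.ofReal_lt_top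
      have hvol : (volume (Set.Ioc (-1:ℝ) 1)).toReal = 2 := by
        rw [Real.volume_Ioc]; rw [ENNReal.toReal_ofReal (by norm_num)]; norm_num
      rw [hvol] at hle
      calc (∫ t in Set.Ioc (-1:ℝ) 1, ‖F m t‖) ≤ ‖∫ t in Set.Ioc (-1:ℝ) 1, ‖F m t‖‖ :=
        le_abs_self _
        _ ≤ |gg N k m| * (((L:ℝ)+1) * 4^L) * 2 := by
            calc ‖∫ t in Set.Ioc (-1:ℝ) 1, ‖F m t‖‖
                ≤ (|gg N k m| * (((L:ℝ)+1) * 4^L)) * 2 := hle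
              _ = |gg N k m| * (((L:ℝ)+1) * 4^L) * 2 := by ring
  have hinter := MeasureTheory.integral_tsum_of_summable_integral_norm hF_int hF_sum
  rw [← hinter]
  rw [← tsum_mul_left]
  refine tsum_congr fun m => ?_
  have hpull : ∫ t in Set.Ioc (-1:ℝ) 1, F m t
      = gg N k m * ∫ t in Set.Ioc (-1:ℝ) 1, t^(2*m+N) * (legendreP L).eval t := by
    rw [← MeasureTheory.integral_const_mul]
    refine integral_congr_ae (Filter.Eventually.of_forall fun t => ?_)
    rw [hF]; ring
  rw [hpull, ← intervalIntegral.integral_of_le (by norm_num : (-1:ℝ) ≤ 1)]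
  unfold aCoef
  ring




lemma abs_aCoef_le (L n : ℕ) : |aCoef L n| ≤ (2*(L:ℝ)+1) * (((L:ℝ)+1) * 4^L) := by
  unfold aCoef
  rw [abs_mul]
  have h1 : |(2*(L:ℝ)+1)/2| = (2*(L:ℝ)+1)/2 := abs_of_pos (by positivity)
  rw [h1]
  have h2 : ‖∫ t in (-1:ℝ)..1, t^n * (legendreP L).eval t‖
      ≤ (((L:ℝ)+1) * 4^L) * |(1:ℝ) - (-1)| := by
    refine intervalIntegral.norm_integral_le_of_norm_le_const fun t ht => ?_
    rw [Set.uIoc_of_le (by norm_num : (-1:ℝ) ≤ 1)] at ht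
    have htabs : |t| ≤ 1 := abs_le.mpr ⟨le_of_lt ht.1, ht.2⟩
    have hp : |t^n| ≤ 1 := by rw [abs_pow]; exact pow_le_one₀ (abs_nonneg _) htabs
    have hP := abs_eval_legendre_le L htabs
    calc ‖t^n * (legendreP L).eval t‖ = |t^n| * |(legendreP L).eval t| := abs_mul _ _
      _ ≤ 1 * (((L:ℝ)+1) * 4^L) := mul_le_mul hp hP (abs_nonneg _) zero_le_one
      _ = ((L:ℝ)+1) * 4^L := one_mul _
  have h3 : |(1:ℝ) - (-1)| = 2 := by norm_num
  rw [h3] at h2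
  calc (2*(L:ℝ)+1)/2 * |∫ t in (-1:ℝ)..1, t^n * (legendreP L).eval t|
      ≤ (2*(L:ℝ)+1)/2 * ((((L:ℝ)+1) * 4^L) * 2) := by
        exact mul_le_mul_of_nonneg_left h2 (by positivity)
    _ = (2*(L:ℝ)+1) * (((L:ℝ)+1) * 4^L) := by ring

lemma nat_add_one_le (n : ℕ) : ((n:ℝ)+1) ≤ 2 * 2^n := by
  have h : n + 1 ≤ 2^n * 2 := by
    have := Nat.lt_two_pow_self (n := n)
    calc n + 1 ≤ 2^n := this
      _ ≤ 2^n * 2 := Nat.le_mul_of_pos_right _ (by norm_num)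
  calc ((n:ℝ)+1) = ((n+1 : ℕ) : ℝ) := by push_cast; ring
    _ ≤ ((2^n * 2 : ℕ) : ℝ) := by exact_mod_cast h
    _ = 2 * 2^n := by push_cast; ring

section main
variable (N : ℕ) (k x : ℝ)

noncomputable def FF (N : ℕ) (k x : ℝ) (p : ℕ × ℕ) : ℝ :=
  gg N k p.1 * aCoef p.2 (2*p.1+N) * (legendreP p.2).eval x

lemma FF_zero {m L : ℕ} (h : 2*m+N < L) : FF N k x (m, L) = 0 := by
  unfold FF
  rw [aCoef_eq_zero h]
  simp

lemma FF_abs_le (hx : |x| ≤ 1) (m L : ℕ) (hL : L ≤ 2*m+N) :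
    |FF N k x (m, L)| ≤ |gg N k m| * (16 * 128^(2*m+N)) := by
  set n := 2*m+N with hn
  unfold FF
  rw [abs_mul, abs_mul]
  have h1 : |aCoef L n| ≤ (2*(L:ℝ)+1) * (((L:ℝ)+1) * 4^L) := abs_aCoef_le L n
  have h2 : |(legendreP L).eval x| ≤ ((L:ℝ)+1) * 4^L := abs_eval_legendre_le L hx
  have hLn : ((L:ℝ)+1) ≤ ((n:ℝ)+1) := by
    have : (L:ℝ) ≤ (n:ℝ) := by exact_mod_cast hL
    linarith
  have h4L : ((4:ℝ))^L ≤ 4^n := pow_le_pow_right₀ (by norm_num) hL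
  have hbig : (2*(L:ℝ)+1) * (((L:ℝ)+1) * 4^L) * (((L:ℝ)+1) * 4^L) ≤ 16 * 128^n := by
    have e1 : (2*(L:ℝ)+1) ≤ 2*((n:ℝ)+1) := by
      have : (L:ℝ) ≤ (n:ℝ) := by exact_mod_cast hL
      linarith
    have e2 : ((n:ℝ)+1) ≤ 2*2^n := nat_add_one_le n
    have pos1 : (0:ℝ) ≤ ((L:ℝ)+1) * 4^L := by positivity
    calc (2*(L:ℝ)+1) * (((L:ℝ)+1) * 4^L) * (((L:ℝ)+1) * 4^L)
        ≤ (2*((n:ℝ)+1)) * (((n:ℝ)+1) * 4^n) * (((n:ℝ)+1) * 4^n) := by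
          refine mul_le_mul (mul_le_mul e1 (mul_le_mul hLn h4L (by positivity) (by positivity))
            pos1 (by positivity)) (mul_le_mul hLn h4L (by positivity) (by positivity)) pos1 ?_
          positivity
      _ = 2 * ((n:ℝ)+1)^3 * (4^n * 4^n) := by ring
      _ ≤ 2 * (2*2^n)^3 * (4^n * 4^n) := by
          refine mul_le_mul_of_nonneg_right (mul_le_mul_of_nonneg_left ?_ (by norm_num)) (by positivity)
          exact pow_le_pow_left₀ (by positivity) e2 3
      _ = 16 * (8^n * (4^n * 4^n)) := by
          rw [mul_pow]
          have : ((2:ℝ)^n)^3 = 8^n := by rw [← pow_mul, mul_comm, pow_mul]; norm_num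
          rw [this]; ring
      _ = 16 * 128^n := by
          congr 1
          rw [show (8:ℝ)^n * ((4:ℝ)^n * (4:ℝ)^n) = (8*(4*4) : ℝ)^n by rw [mul_pow, mul_pow],
            show (8*(4*4):ℝ) = 128 by norm_num]
  calc |gg N k m| * |aCoef L n| * |(legendreP L).eval x|
      ≤ |gg N k m| * ((2*(L:ℝ)+1) * (((L:ℝ)+1) * 4^L)) * (((L:ℝ)+1) * 4^L) := by
        refine mul_le_mul (mul_le_mul_of_nonneg_left h1 (abs_nonneg _)) h2 (abs_nonneg _) ?_
        positivity
    _ = |gg N k m| * ((2*(L:ℝ)+1) * (((L:ℝ)+1) * 4^L) * (((L:ℝ)+1) * 4^L)) := by ring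
    _ ≤ |gg N k m| * (16 * 128^n) := mul_le_mul_of_nonneg_left hbig (abs_nonneg _)

lemma FF_fiber_summable (m : ℕ) : Summable (fun L => |FF N k x (m, L)|) := by
  refine summable_of_ne_finset_zero (s := Finset.range (2*m+N+1)) fun L hL => ?_
  rw [Finset.mem_range, not_lt] at hL
  rw [FF_zero N k x (by omega), abs_zero]

lemma FF_fiber_sum_le (hx : |x| ≤ 1) (m : ℕ) :
    ∑' L, |FF N k x (m, L)| ≤ 32 * |gg N k m| * 256^(2*m+N) := by
  set n := 2*m+N with hn
  rw [tsum_eq_sum (s := Finset.range (n+1)) (fun L hL => by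
    rw [Finset.mem_range, not_lt] at hL
    rw [FF_zero N k x (by omega), abs_zero])]
  have hterm : ∀ L ∈ Finset.range (n+1), |FF N k x (m, L)| ≤ |gg N k m| * (16 * 128^n) := by
    intro L hL
    rw [Finset.mem_range] at hL
    exact FF_abs_le N k x hx m L (by omega)
  calc ∑ L ∈ Finset.range (n+1), |FF N k x (m, L)|
      ≤ ∑ L ∈ Finset.range (n+1), |gg N k m| * (16 * 128^n) := Finset.sum_le_sum hterm
    _ = ((n:ℝ)+1) * (|gg N k m| * (16 * 128^n)) := by
        rw [Finset.sum_const, Finset.card_range, nsmul_eq_mul]; push_cast; ring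
    _ ≤ (2*2^n) * (|gg N k m| * (16 * 128^n)) := by
        refine mul_le_mul_of_nonneg_right (nat_add_one_le n) (by positivity)
    _ = 32 * |gg N k m| * (2^n * 128^n) := by ring
    _ = 32 * |gg N k m| * 256^n := by
        rw [show (2:ℝ)^n * 128^n = (2*128:ℝ)^n by rw [mul_pow],
          show ((2:ℝ)*128) = 256 by norm_num]

lemma FF_summable (hx : |x| ≤ 1) : Summable (FF N k x) := by
  rw [← summable_abs_iff]
  rw [summable_prod_of_nonneg (fun p => abs_nonneg _)]
  refine ⟨FF_fiber_summable N k x, ?_⟩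
  have hmaj : Summable (fun m : ℕ =>
      (32 * 256^N) * ((|k|/2)^N * ((|k|/2)^2 * 65536)^m / m.factorial)) :=
    summable_gg_mul N k _ 65536 (by norm_num)
  refine hmaj.of_nonneg_of_le (fun m => tsum_nonneg fun L => abs_nonneg _) (fun m => ?_)
  refine le_trans (FF_fiber_sum_le N k x hx m) ?_
  have habs := abs_gg_le N k m
  have h256 : (256:ℝ)^(2*m+N) = 256^N * 65536^m := by
    have h1 : (256:ℝ)^(2*m) = 65536^m := by
      rw [show 2*m = m*2 by ring, pow_mul, ← pow_mul, show m*2 = 2*m by ring, pow_mul]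
      norm_num
    rw [pow_add, h1, mul_comm]
  calc 32 * |gg N k m| * 256^(2*m+N)
      ≤ 32 * ((|k|/2)^N * ((|k|/2)^2)^m / m.factorial) * 256^(2*m+N) := by
        refine mul_le_mul_of_nonneg_right (mul_le_mul_of_nonneg_left habs (by norm_num)) (by positivity)
    _ = (32 * 256^N) * ((|k|/2)^N * (((|k|/2)^2)^m * 65536^m) / m.factorial) := by
        rw [h256]; ring
    _ = (32 * 256^N) * ((|k|/2)^N * ((|k|/2)^2 * 65536)^m / m.factorial) := by
        rw [mul_pow]

end main


end FLaux

open FLaux in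
/-- The Fourier–Legendre series of `I_N(k·)` converges pointwise on `[-1, 1]`
to the function value: `∑_{L=0}^∞ b_{LN}(k) P_L(x) = I_N(kx)`. -/
theorem fourierLegendre_series_besselI (N : ℕ) (k x : ℝ)
    (hx₁ : -1 ≤ x) (hx₂ : x ≤ 1) :
    HasSum (fun L : ℕ => fourierLegendreCoeffI L N k * (legendreP L).eval x)
      (besselI N (k * x)) := by
  have hx : |x| ≤ 1 := abs_le.mpr ⟨hx₁, hx₂⟩
  have hsumm : Summable (FF N k x) := FF_summable N k x hx
  -- fibers over m sum to g_m x^n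
  have hfib_m : ∀ m : ℕ, HasSum (fun L => FF N k x (m, L)) (gg N k m * x^(2*m+N)) := by
    intro m
    have h0 : ∀ L ∉ Finset.range (2*m+N+1), FF N k x (m, L) = 0 := fun L hL => by
      rw [Finset.mem_range, not_lt] at hL
      exact FF_zero N k x (by omega)
    have hs := hasSum_sum_of_ne_finset_zero (L := SummationFilter.unconditional ℕ) h0
    have hval : ∑ L ∈ Finset.range (2*m+N+1), FF N k x (m, L) = gg N k m * x^(2*m+N) := by
      rw [monomial_expand_eval (2*m+N) x, Finset.mul_sum]
      refine Finset.sum_congr rfl fun L _ => ?_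
      unfold FF
      ring
    rwa [hval] at hs
  -- total sum equals besselI N (k x)
  have hFF : HasSum (FF N k x) (besselI N (k*x)) := by
    have h1 : HasSum (fun m => gg N k m * x^(2*m+N)) (∑' p, FF N k x p) :=
      HasSum.prod_fiberwise hsumm.hasSum hfib_m
    have h2 : besselI N (k*x) = ∑' p, FF N k x p := by
      rw [besselI_mul_eq, h1.tsum_eq]
    rw [h2]
    exact hsumm.hasSum
  -- swap coordinates
  have hswap : HasSum (fun p : ℕ × ℕ => FF N k x (p.2, p.1)) (besselI N (k*x)) := by
    have he := (Equiv.prodComm ℕ ℕ).injective.hasSum_iff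
      (f := FF N k x) (by simp [Equiv.prodComm]) |>.mpr hFF
    exact he
  -- fibers over L
  have hfib_L : ∀ L : ℕ, HasSum (fun m => FF N k x (m, L))
      (fourierLegendreCoeffI L N k * (legendreP L).eval x) := by
    intro L
    have hs : Summable (fun m => FF N k x (m, L)) := hswap.summable.prod_factor L
    have hval : fourierLegendreCoeffI L N k * (legendreP L).eval x
        = ∑' m, FF N k x (m, L) := by
      rw [coeff_eq, ← tsum_mul_right]
      rfl
    rw [hval]
    exact hs.hasSum
  exact HasSum.prod_fiberwise hswap hfib_L
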